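/- arXiv:2403.17251 — 2 statements merged into one kernel-verified Lean document; each statement's English description precedes it below -/
import Mathlib

section
/- (Minkowski's lemma) Let n be a positive integer, p an odd prime, and A ∈ GL_n(Z) a matrix of finite order such that A is congruent to the identity matrix modulo p (i.e., every entry of A − I is divisible by p). Then A = I. -/
open Finset

/-- If `c` divides every entry of `X`, then `c ^ k` divides every entry of `X ^ k`. -/
lemma mink_entry_dvd_pow {n : ℕ} (c : ℤ) (X : Matrix (Fin n) (Fin n) ℤ)
    (h : ∀ i j, c ∣ X i j) : ∀ (k : ℕ) i j, c ^ k ∣ (X ^ k) i j := by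
  intro k
  induction k with
  | zero => intro i j; simp
  | succ k ih =>
    intro i j
    rw [pow_succ X, Matrix.mul_apply, pow_succ c]
    exact Finset.dvd_sum fun l _ => mul_dvd_mul (ih i l) (h l j)

/-- If `c` divides every entry of `M - 1`, the same holds for powers of `M`. -/
lemma mink_dvd_pow_sub_one {n : ℕ} (c : ℤ) (M : Matrix (Fin n) (Fin n) ℤ)
    (h : ∀ i j, c ∣ (M - 1) i j) : ∀ (t : ℕ) i j, c ∣ (M ^ t - 1) i j := by
  intro t
  induction t with
  | zero => intro i j; simp
  | succ t ih =>
    intro i j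
    have key : M ^ (t + 1) - 1 = M ^ t * (M - 1) + (M ^ t - 1) := by
      rw [pow_succ]; noncomm_ring
    rw [key, Matrix.add_apply]
    refine dvd_add ?_ (ih i j)
    rw [Matrix.mul_apply]
    exact Finset.dvd_sum fun l _ => Dvd.dvd.mul_left (h l j) _

/-- Key lifting step: if `M ^ q = 1` with `q` prime and `M ≡ 1 mod p^m` (`m ≥ 1`),
then `M ≡ 1 mod p^(m+1)`. -/
lemma mink_step {n : ℕ} (p q m : ℕ) (hp : p.Prime) (hodd : Odd p) (hq : q.Prime)
    (hm : 1 ≤ m) (M : Matrix (Fin n) (Fin n) ℤ) (hM : M ^ q = 1)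
    (h : ∀ i j, (p : ℤ) ^ m ∣ (M - 1) i j) :
    ∀ i j, (p : ℤ) ^ (m + 1) ∣ (M - 1) i j := by
  set X : Matrix (Fin n) (Fin n) ℤ := M - 1 with hX
  have hXpow : ∀ (k : ℕ) i j, (p : ℤ) ^ (k * m) ∣ (X ^ k) i j := by
    intro k i j
    have := mink_entry_dvd_pow ((p : ℤ) ^ m) X h k i j
    rwa [← pow_mul, mul_comm m k] at this
  have hb : ∑ k ∈ Finset.range (q + 1), (q.choose k : ℤ) • X ^ k = 1 := by
    have h1 : X + 1 = M := by rw [hX]; noncomm_ring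
    have hcomm := (Commute.one_right X).add_pow q
    rw [h1, hM] at hcomm
    rw [hcomm]
    refine Finset.sum_congr rfl fun k _ => ?_
    rw [one_pow, mul_one, Nat.cast_smul_eq_nsmul, nsmul_eq_mul']
  have he : ∀ i j, ∑ k ∈ Finset.range (q + 1), (q.choose k : ℤ) * (X ^ k) i j
      = (1 : Matrix (Fin n) (Fin n) ℤ) i j := by
    intro i j
    rw [← hb, Matrix.sum_apply]
    refine Finset.sum_congr rfl fun k _ => ?_
    rw [Matrix.smul_apply, smul_eq_mul]
  obtain ⟨r, hr⟩ : ∃ r, q = r + 2 := ⟨q - 2, by have := hq.two_le; omega⟩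
  intro i j
  have he' := he i j
  rw [hr] at he'
  rw [Finset.sum_range_succ' _ (r + 2), Finset.sum_range_succ' _ (r + 1)] at he'
  simp only [zero_add, pow_zero, Nat.choose_zero_right, Nat.cast_one, one_mul, pow_one] at he'
  have hchoose1 : ((r + 2).choose 1 : ℤ) = (q : ℤ) := by
    rw [Nat.choose_one_right, hr]
  have hqx : (q : ℤ) * X i j
      = - ∑ k ∈ Finset.range (r + 1), ((r + 2).choose (k + 1 + 1) : ℤ) * (X ^ (k + 1 + 1)) i j := by
    rw [← hchoose1]; linarith [he']
  by_cases hpq : p ∣ q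
  · -- then p = q; show p^(m+2) divides the tail
    have hpq' : p = q := (Nat.prime_dvd_prime_iff_eq hp hq).mp hpq
    have hp3 : 3 ≤ p := by
      rcases hodd with ⟨t, ht⟩
      have := hp.two_le
      omega
    have htail : (p : ℤ) ^ (m + 2) ∣ (q : ℤ) * X i j := by
      rw [hqx]
      refine dvd_neg.mpr (Finset.dvd_sum fun k hk => ?_)
      have hk' : k + 2 ≤ q := by
        have := Finset.mem_range.mp hk
        omega
      rcases lt_or_eq_of_le hk' with hlt | heq
      · -- p ∣ choose q (k+2), and p^(2m) ∣ (X^(k+2)) i j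
        have hd : p ∣ q.choose (k + 2) := by
          rw [hpq']
          exact hq.dvd_choose_self (by omega) hlt
        have hd2 : (p : ℤ) ^ (2 * m) ∣ (X ^ (k + 1 + 1)) i j := by
          have := hXpow (k + 2) i j
          exact dvd_trans (pow_dvd_pow _ (by nlinarith)) this
        have hmain : (p : ℤ) * (p : ℤ) ^ (2 * m)
            ∣ ((r + 2).choose (k + 1 + 1) : ℤ) * (X ^ (k + 1 + 1)) i j := by
          refine mul_dvd_mul ?_ hd2
          rw [← hr]
          exact_mod_cast Int.natCast_dvd_natCast.mpr hd
        refine dvd_trans ?_ hmain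
        calc (p : ℤ) ^ (m + 2) ∣ (p : ℤ) ^ (1 + 2 * m) := pow_dvd_pow _ (by omega)
          _ = (p : ℤ) * (p : ℤ) ^ (2 * m) := by rw [pow_add, pow_one]
      · -- k + 2 = q = p ≥ 3, so p^((k+2)m) divides, (k+2)m ≥ 3m ≥ m + 2
        have hd2 : (p : ℤ) ^ ((k + 2) * m) ∣ (X ^ (k + 1 + 1)) i j := hXpow (k + 2) i j
        have hle : m + 2 ≤ (k + 2) * m := by nlinarith [hpq' ▸ heq]
        exact Dvd.dvd.mul_left (dvd_trans (pow_dvd_pow _ hle) hd2) _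
    have hdvd' : (p : ℤ) * (p : ℤ) ^ (m + 1) ∣ (p : ℤ) * X i j := by
      have h1 : (p : ℤ) * (p : ℤ) ^ (m + 1) = (p : ℤ) ^ (m + 2) := by
        rw [pow_succ]; ring
      rw [h1]
      have hq' : ((q : ℕ) : ℤ) = ((p : ℕ) : ℤ) := by exact_mod_cast hpq'.symm
      rw [hq'] at htail
      exact htail
    have hp0 : (p : ℤ) ≠ 0 := by exact_mod_cast hp.ne_zero
    exact (mul_dvd_mul_iff_left hp0).mp hdvd'
  · -- p coprime to q
    have htail : (p : ℤ) ^ (m + 1) ∣ (q : ℤ) * X i j := by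
      rw [hqx]
      refine dvd_neg.mpr (Finset.dvd_sum fun k hk => ?_)
      have hd2 : (p : ℤ) ^ (2 * m) ∣ (X ^ (k + 1 + 1)) i j := by
        have := hXpow (k + 2) i j
        exact dvd_trans (pow_dvd_pow _ (by nlinarith)) this
      exact Dvd.dvd.mul_left (dvd_trans (pow_dvd_pow _ (by omega)) hd2) _
    have hc1 : IsCoprime ((p : ℤ)) (q : ℤ) := by
      rw [Int.isCoprime_iff_gcd_eq_one]
      simpa [Int.gcd_natCast_natCast] using ((hp.coprime_iff_not_dvd).mpr hpq)
    exact (hc1.pow_left).dvd_of_dvd_mul_left htail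

/-- Matrix-level main lemma. -/
lemma mink_main {n : ℕ} (p : ℕ) (hp : p.Prime) (hodd : Odd p) :
    ∀ k : ℕ, 0 < k → ∀ M : Matrix (Fin n) (Fin n) ℤ, M ^ k = 1 →
      (∀ i j, (p : ℤ) ∣ (M - 1) i j) → M = 1 := by
  intro k
  induction k using Nat.strong_induction_on with
  | _ k ih =>
    intro hk M hMk hM
    rcases eq_or_lt_of_le (show 1 ≤ k from hk) with h1 | h2
    · rw [← h1, pow_one] at hMk
      exact hMk
    · -- k ≥ 2
      set q := k.minFac with hqdef
      have hq : q.Prime := Nat.minFac_prime (by omega)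
      set k' := k / q with hk'def
      have hk'q : k' * q = k := Nat.div_mul_cancel (Nat.minFac_dvd k)
      have hk'pos : 0 < k' := Nat.div_pos (Nat.minFac_le hk) hq.pos
      have hk'lt : k' < k := Nat.div_lt_self hk hq.two_le
      have hM'q : (M ^ k') ^ q = 1 := by rw [← pow_mul, hk'q, hMk]
      have hM'cong : ∀ i j, (p : ℤ) ∣ (M ^ k' - 1) i j := mink_dvd_pow_sub_one _ M hM k'
      have hall : ∀ m : ℕ, 1 ≤ m → ∀ i j, (p : ℤ) ^ m ∣ (M ^ k' - 1) i j := by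
        intro m
        induction m with
        | zero => omega
        | succ m ihm =>
          intro _ i j
          rcases Nat.eq_zero_or_pos m with h0 | hpos
          · subst h0; simpa using hM'cong i j
          · exact mink_step p q m hp hodd hq hpos (M ^ k') hM'q (ihm hpos) i j
      have hM' : M ^ k' = 1 := by
        have hsub : M ^ k' - 1 = 0 := by
          ext i j
          simp only [Matrix.zero_apply]
          by_contra hne
          obtain ⟨m, hmlt⟩ : ∃ m : ℕ, ((M ^ k' - 1) i j).natAbs < p ^ m :=
            pow_unbounded_of_one_lt _ (by exact_mod_cast hp.one_lt)
          have hdvd : (p : ℤ) ^ m ∣ (M ^ k' - 1) i j := by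
            rcases Nat.eq_zero_or_pos m with h0 | hpos
            · subst h0; simp
            · exact hall m hpos i j
          have hnd : p ^ m ∣ ((M ^ k' - 1) i j).natAbs := by
            have h2 : ((p : ℤ) ^ m).natAbs ∣ ((M ^ k' - 1) i j).natAbs :=
              Int.natAbs_dvd_natAbs.mpr hdvd
            rwa [Int.natAbs_pow, Int.natAbs_natCast] at h2
          have hle := Nat.le_of_dvd (Int.natAbs_pos.mpr hne) hnd
          omega
        exact sub_eq_zero.mp hsub
      exact ih k' hk'lt hk'pos M hM' hM

/-- Minkowski's lemma: a finite-order element of `GLₙ(ℤ)` congruent to the identity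
modulo an odd prime `p` is the identity. -/
theorem eq_one_of_finite_order_of_congruent_one (n : ℕ) (hn : 0 < n)
    (p : ℕ) (hp : p.Prime) (hodd : Odd p)
    (A : GL (Fin n) ℤ)
    (hfin : ∃ k : ℕ, 0 < k ∧ A ^ k = 1)
    (hcong : ∀ i j, (p : ℤ) ∣ ((A : Matrix (Fin n) (Fin n) ℤ) - 1) i j) :
    A = 1 := by
  obtain ⟨k, hk, hAk⟩ := hfin
  have hMk : (A : Matrix (Fin n) (Fin n) ℤ) ^ k = 1 := by
    have := congrArg (Units.val) hAk
    simpa using this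
  exact Units.ext (mink_main p hp hodd k hk (A : Matrix (Fin n) (Fin n) ℤ) hMk hcong)
end

section
/- Every finite subgroup of GL_n(Z) has order at most |GL_n(Z/3)| = ∏_{i=0}^{n-1} (3^n − 3^i). -/
open Finset

lemma aux_three_dvd_key {n : ℕ} (A : Matrix (Fin n) (Fin n) ℤ) {p : ℕ} (hp : p.Prime)
    (hA : A ^ p = 1) (h3 : ∀ i j, (3:ℤ) ∣ (A - 1) i j) : A = 1 := by
  classical
  by_contra hA1
  set d : Matrix (Fin n) (Fin n) ℤ := A - 1 with hd
  have hd0 : d ≠ 0 := fun h => hA1 (by rw [hd, sub_eq_zero] at h; exact h)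
  have hPex : ∃ m, ¬ ∀ i j, (3:ℤ)^m ∣ d i j := by
    obtain ⟨i0, j0, hij⟩ : ∃ i j, d i j ≠ 0 := by
      by_contra h; push_neg at h; exact hd0 (by ext i j; simpa using h i j)
    refine ⟨(d i0 j0).natAbs, fun h => ?_⟩
    have h1 : (3:ℕ)^(d i0 j0).natAbs ∣ (d i0 j0).natAbs := by
      have := (h i0 j0)
      rwa [← Int.natAbs_dvd_natAbs, Int.natAbs_pow] at this
    have h2 : (3:ℕ)^(d i0 j0).natAbs ≤ (d i0 j0).natAbs :=
      Nat.le_of_dvd (by simpa using hij) h1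
    have h4 : (d i0 j0).natAbs < 3 ^ (d i0 j0).natAbs :=
      Nat.lt_pow_self (by norm_num)
    omega
  let m0 := Nat.find hPex
  have hm0 : ¬ ∀ i j, (3:ℤ)^m0 ∣ d i j := Nat.find_spec hPex
  have hlt : ∀ m < m0, ∀ i j, (3:ℤ)^m ∣ d i j := fun m hm => by
    have := Nat.find_min hPex hm; tauto
  have hm02 : 2 ≤ m0 := by
    by_contra h
    interval_cases m0
    · exact hm0 (fun i j => by simpa using one_dvd _)
    · exact hm0 (fun i j => by simpa using h3 i j)
  set k := m0 - 1 with hkdef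
  have hk1pos : 1 ≤ k := by omega
  have hk : ∀ i j, (3:ℤ)^k ∣ d i j := hlt k (by omega)
  have hk1 : ¬ ∀ i j, (3:ℤ)^(k+1) ∣ d i j := by
    have : k + 1 = m0 := by omega
    rw [this]; exact hm0
  set B : Matrix (Fin n) (Fin n) ℤ := Matrix.of (fun i j => d i j / 3^k) with hBdef
  have hB : ∀ i j, d i j = 3^k * B i j := fun i j => (Int.mul_ediv_cancel' (hk i j)).symm
  have hA' : A = (3^k : ℤ) • B + 1 := by
    ext i j
    have h5 : A i j = (1 : Matrix (Fin n) (Fin n) ℤ) i j + d i j := by simp [hd]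
    rw [h5, hB i j, Matrix.add_apply, Matrix.smul_apply, smul_eq_mul]
    ring
  have expand : ((3^k:ℤ) • B + 1) ^ p
      = ∑ m ∈ Finset.range (p+1), ((3^(k*m) * (p.choose m) : ℤ)) • B^m := by
    rw [Commute.add_pow (Commute.one_right _)]
    refine Finset.sum_congr rfl fun m hm => ?_
    rw [one_pow, mul_one, smul_pow, smul_mul_assoc, ← (Nat.cast_commute (p.choose m) (B ^ m)).eq,
      ← nsmul_eq_mul, ← Nat.cast_smul_eq_nsmul ℤ, smul_smul, pow_mul]
  -- split the sum
  have hp2 : 2 ≤ p := hp.two_le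
  have split : ∑ m ∈ Finset.range (p+1), ((3^(k*m) * (p.choose m) : ℤ)) • B^m
      = 1 + ((3^k * p : ℤ)) • B
        + ∑ m ∈ Finset.Ico 2 (p+1), ((3^(k*m) * (p.choose m) : ℤ)) • B^m := by
    rw [Finset.range_eq_Ico, Finset.sum_eq_sum_Ico_succ_bot (by omega),
      Finset.sum_eq_sum_Ico_succ_bot (show 1 < p + 1 by omega)]
    simp [add_assoc]
  have E : ((3^k * p : ℤ)) • B
      + ∑ m ∈ Finset.Ico 2 (p+1), ((3^(k*m) * (p.choose m) : ℤ)) • B^m = 0 := by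
    have := hA
    rw [hA', expand, split] at this
    -- this : 1 + c•B + S = 1
    have h6 : (1:Matrix (Fin n) (Fin n) ℤ) + (((3^k * p : ℤ)) • B
        + ∑ m ∈ Finset.Ico 2 (p+1), ((3^(k*m) * (p.choose m) : ℤ)) • B^m) = 1 + 0 := by
      rw [← add_assoc, this, add_zero]
    exact add_left_cancel h6
  apply hk1
  intro i j
  have hE := congrArg (fun M => M i j) E
  simp only [Matrix.add_apply, Matrix.smul_apply, Matrix.sum_apply, smul_eq_mul,
    Matrix.zero_apply] at hE
  have hE' : (3:ℤ)^k * p * B i j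
      = -∑ m ∈ Finset.Ico 2 (p+1), ((3^(k*m) * (p.choose m) : ℤ)) * (B^m) i j := by
    linarith [hE]
  have hprime3 : Prime (3:ℤ) := Int.prime_three
  have hdvd3B : (3:ℤ) ∣ B i j := by
    by_cases hp3 : p = 3
    · subst hp3
      have hS : (3:ℤ)^(2*k+1) ∣
          ∑ m ∈ Finset.Ico 2 (3+1), ((3^(k*m) * ((3:ℕ).choose m) : ℤ)) * (B^m) i j := by
        refine Finset.dvd_sum fun m hm => ?_
        obtain ⟨hm1, hm2⟩ := Finset.mem_Ico.mp hm
        interval_cases m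
        · have hc : (((3:ℕ).choose 2 : ℕ) : ℤ) = 3 := by decide
          rw [hc]
          have : (3:ℤ)^(2*k+1) = 3^(k*2) * 3 := by ring
          rw [this]
          exact Dvd.dvd.mul_right (dvd_refl _) _
        · refine Dvd.dvd.mul_right (Dvd.dvd.mul_right ?_ _) _
          exact pow_dvd_pow 3 (by omega)
      have hS2 : (3:ℤ)^(2*k+1) ∣ 3^k * (3:ℕ) * B i j := by
        rw [hE']; exact dvd_neg.mpr hS
      have h7 : (3:ℤ)^(k+1) * 3^k ∣ 3^(k+1) * B i j := by
        have e1 : (3:ℤ)^(k+1) * 3^k = 3^(2*k+1) := by ring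
        have e2 : (3:ℤ)^k * (3:ℕ) * B i j = 3^(k+1) * B i j := by push_cast; ring
        rw [e1, ← e2]; exact hS2
      have h8 : (3:ℤ)^k ∣ B i j :=
        (mul_dvd_mul_iff_left (pow_ne_zero (k+1) (by norm_num : (3:ℤ) ≠ 0))).mp h7
      exact dvd_trans (dvd_pow_self 3 (by omega : k ≠ 0)) h8
    · have hS : (3:ℤ)^(k+1) ∣
          ∑ m ∈ Finset.Ico 2 (p+1), ((3^(k*m) * (p.choose m) : ℤ)) * (B^m) i j := by
        refine Finset.dvd_sum fun m hm => ?_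
        simp only [Finset.mem_Ico] at hm
        refine Dvd.dvd.mul_right (Dvd.dvd.mul_right ?_ _) _
        exact pow_dvd_pow 3 (by nlinarith [hm.1])
      have hS2 : (3:ℤ)^(k+1) ∣ 3^k * p * B i j := by
        rw [hE']; exact dvd_neg.mpr hS
      have h7 : (3:ℤ)^k * 3 ∣ 3^k * (p * B i j) := by
        have e1 : (3:ℤ)^k * 3 = 3^(k+1) := by ring
        have e2 : (3:ℤ)^k * (p * B i j) = 3^k * p * B i j := by ring
        rw [e1, e2]; exact hS2
      have h8 : (3:ℤ) ∣ p * B i j :=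
        (mul_dvd_mul_iff_left (pow_ne_zero k (by norm_num : (3:ℤ) ≠ 0))).mp h7
      rcases hprime3.dvd_mul.mp h8 with h9 | h9
      · exfalso
        have : (3:ℕ) ∣ p := by exact_mod_cast h9
        exact hp3 ((Nat.prime_dvd_prime_iff_eq Nat.prime_three hp).mp this).symm
      · exact h9
  rw [hB i j]
  have : (3:ℤ)^(k+1) = 3^k * 3 := by ring
  rw [this]
  exact mul_dvd_mul_left _ hdvd3B

/-- Every finite subgroup of `GLₙ(ℤ)` has order at most
`|GLₙ(ℤ/3)| = ∏_{i=0}^{n-1} (3^n - 3^i)`. -/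
theorem card_finite_subgroup_GL_int_le (n : ℕ) (H : Subgroup (GL (Fin n) ℤ)) [Finite H] :
    Nat.card H ≤ Nat.card (GL (Fin n) (ZMod 3)) ∧
    Nat.card (GL (Fin n) (ZMod 3)) = ∏ i ∈ Finset.range n, (3 ^ n - 3 ^ i) := by
  constructor
  · let f : H →* GL (Fin n) (ZMod 3) :=
      (Matrix.GeneralLinearGroup.map (Int.castRingHom (ZMod 3))).comp H.subtype
    have hinj : Function.Injective f := by
      rw [← MonoidHom.ker_eq_bot_iff, eq_bot_iff]
      intro x hx
      rw [MonoidHom.mem_ker] at hx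
      rw [Subgroup.mem_bot]
      by_contra hx1
      -- take an element of prime order
      set N := orderOf x with hN
      have hNpos : 0 < N := orderOf_pos x
      have hN1 : N ≠ 1 := fun h => hx1 (orderOf_eq_one_iff.mp h)
      set p := N.minFac with hpdef
      have hp : p.Prime := Nat.minFac_prime hN1
      have hpd : p ∣ N := Nat.minFac_dvd N
      set y := x ^ (N / p) with hy
      have hyp : y ^ p = 1 := by
        rw [hy, ← pow_mul, Nat.div_mul_cancel hpd, hN, pow_orderOf_eq_one]
      have hy1 : y ≠ 1 := by
        intro h
        have : N ∣ N / p := orderOf_dvd_of_pow_eq_one (by rw [← hy, h])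
        have hlt : N / p < N := Nat.div_lt_self hNpos hp.one_lt
        have hpos : 0 < N / p := Nat.div_pos (Nat.le_of_dvd hNpos hpd) hp.pos
        have hle := Nat.le_of_dvd hpos this
        omega
      -- matrix of y
      set A : Matrix (Fin n) (Fin n) ℤ := ((y : GL (Fin n) ℤ) : Matrix (Fin n) (Fin n) ℤ) with hAdef
      have hApow : A ^ p = 1 := by
        have h1 : ((y : GL (Fin n) ℤ)) ^ p = 1 := by
          have := congrArg (H.subtype) hyp
          simpa using this
        have := congrArg (Units.val) h1
        simpa [Units.val_pow_eq_pow_val] using this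
      have hfy : f y = 1 := by
        rw [hy, map_pow, hx, one_pow]
      have hmap : A.map (Int.cast : ℤ → ZMod 3) = 1 := by
        have := congrArg (Units.val) hfy
        simpa [f, Matrix.GeneralLinearGroup.map, Units.coe_map, RingHom.mapMatrix_apply] using this
      have h3 : ∀ i j, (3:ℤ) ∣ (A - 1) i j := by
        intro i j
        have h1 : ((A i j : ZMod 3)) = (1 : Matrix (Fin n) (Fin n) (ZMod 3)) i j := by
          rw [← hmap]; simp [Matrix.map_apply]
        have h2 : (((1 : Matrix (Fin n) (Fin n) ℤ) i j : ℤ) : ZMod 3)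
            = (1 : Matrix (Fin n) (Fin n) (ZMod 3)) i j := by
          by_cases h : i = j <;> simp [Matrix.one_apply, h]
        have hz : (((A - 1) i j : ℤ) : ZMod 3) = 0 := by
          push_cast [Matrix.sub_apply]
          rw [h1, ← h2]
          ring
        exact_mod_cast (ZMod.intCast_zmod_eq_zero_iff_dvd _ 3).mp hz
      have : A = 1 := aux_three_dvd_key A hp hApow h3
      apply hy1
      have hyGL : (y : GL (Fin n) ℤ) = 1 := Units.ext (by simpa [hAdef] using this)
      exact Subtype.ext (by simpa using hyGL)
    exact Nat.card_le_card_of_injective f hinj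
  · rw [Matrix.card_GL_field]
    rw [← Fin.prod_univ_eq_prod_range (fun i => (3 ^ n - 3 ^ i))]
    simp [ZMod.card]
end
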